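/- Let G = ⟨X | R⟩ be a group presentation with exp_X(r) ≡ 0 (mod M) for every relator r, let H ≤ G, and let Γ be the Schreier graph of G with respect to H and X. Then every connected component of Γ ⊗ C_M is isomorphic, as a labeled graph, to the Schreier graph of G with respect to the subgroup H_M = {h ∈ H : exp_X(h) ≡ 0 (mod M)}. -/

import Mathlib

/-- An oriented (multi)graph: vertices, edges, initial and terminal maps. -/
structure OGraph where
  V : Type
  E : Type
  ι : E → V
  τ : E → V

namespace OGraph

/-- Tensor product of oriented graphs. -/
def tensor (G H : OGraph) : OGraph where
  V := G.V × H.V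
  E := G.E × H.E
  ι e := (G.ι e.1, H.ι e.2)
  τ e := (G.τ e.1, H.τ e.2)

/-- Isomorphism of oriented graphs. -/
structure Iso (G H : OGraph) where
  fV : G.V ≃ H.V
  fE : G.E ≃ H.E
  hι : ∀ e, H.ι (fE e) = fV (G.ι e)
  hτ : ∀ e, H.τ (fE e) = fV (G.τ e)

/-- Weak adjacency. -/
def Adj (G : OGraph) (u v : G.V) : Prop :=
  (∃ e, G.ι e = u ∧ G.τ e = v) ∨ (∃ e, G.ι e = v ∧ G.τ e = u)

/-- Weak reachability. -/
def Reach (G : OGraph) : G.V → G.V → Prop := Relation.ReflTransGen G.Adj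

/-- The connected component of a vertex. -/
def component (G : OGraph) (v : G.V) : OGraph where
  V := {w // G.Reach v w}
  E := {e // G.Reach v (G.ι e)}
  ι e := ⟨G.ι e.1, e.2⟩
  τ e := ⟨G.τ e.1, e.2.tail (Or.inl ⟨e.1, rfl, rfl⟩)⟩

end OGraph

/-- The oriented cycle of length `M` (`M = 0` gives the oriented line, i.e. `M = ∞`). -/
@[reducible] def cycle (M : ℕ) : OGraph where
  V := ZMod M
  E := ZMod M
  ι i := i
  τ i := i + 1

/-- An oriented graph whose edges carry labels in `X`. -/
structure LGraph (X : Type) extends OGraph where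
  lab : E → X

/-- Strong (label-preserving) isomorphism of labeled oriented graphs. -/
structure LIso {X : Type} (G H : LGraph X) extends OGraph.Iso G.toOGraph H.toOGraph where
  hlab : ∀ e, H.lab (fE e) = G.lab e

/-- Tensor product of a labeled graph with the cycle `C_M`, the labels being inherited
from the first factor. -/
def LGraph.tensorC {X : Type} (G : LGraph X) (M : ℕ) : LGraph X where
  toOGraph := G.toOGraph.tensor (cycle M)
  lab e := G.lab e.1

/-- The connected component of a vertex of a labeled graph. -/
def LGraph.component {X : Type} (G : LGraph X) (v : G.V) : LGraph X where
  toOGraph := G.toOGraph.component v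
  lab e := G.lab e.1

/-- The labeled oriented Cayley graph of a group `G` with generators indexed by `f : X → G`:
an edge labeled `x` from `g` to `g * f x`. -/
def cayley (G : Type) [Group G] {X : Type} (f : X → G) : LGraph X where
  V := G
  E := G × X
  ι e := e.1
  τ e := e.1 * f e.2
  lab e := e.2

/-- The labeled oriented Schreier graph of `G` with respect to a subgroup `H` and
generators `f : X → G`: vertices are right cosets `Hg`, with an edge labeled `x`
from `Hg` to `Hg·(f x)`. -/
def schreier (G : Type) [Group G] (H : Subgroup G) {X : Type} (f : X → G) : LGraph X where
  V := Quotient (QuotientGroup.rightRel H)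
  E := Quotient (QuotientGroup.rightRel H) × X
  ι e := e.1
  τ e := Quotient.map (fun g => g * f e.2)
    (fun a b h => by
      have h' := QuotientGroup.rightRel_apply.mp h
      exact QuotientGroup.rightRel_apply.mpr (by simpa [mul_assoc] using h')) e.1
  lab e := e.2

/-- Inverse of a strong isomorphism of labeled graphs. -/
def LIso.symm' {X : Type} {G H : LGraph X} (σ : LIso G H) : LIso H G where
  fV := σ.fV.symm
  fE := σ.fE.symm
  hι e := σ.fV.injective (by rw [← σ.hι, Equiv.apply_symm_apply, Equiv.apply_symm_apply])
  hτ e := σ.fV.injective (by rw [← σ.hτ, Equiv.apply_symm_apply, Equiv.apply_symm_apply])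
  hlab e := by rw [← σ.hlab, Equiv.apply_symm_apply]

open QuotientGroup Multiplicative in
theorem schreier_aux {X G : Type} [Group G] (f : X → G)
    (hgen : Subgroup.closure (Set.range f) = ⊤) {M : ℕ}
    (φ : G →* Multiplicative (ZMod M)) (hφ : ∀ x, φ (f x) = ofAdd (1 : ZMod M))
    (H : Subgroup G) (p : ((schreier G H f).tensorC M).V) :
    Nonempty (LIso (((schreier G H f).tensorC M).component p)
      (schreier G (H ⊓ φ.ker) f)) := by
  classical
  obtain ⟨q₀, i₀⟩ := p
  set T : LGraph X := (schreier G H f).tensorC M with hT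
  set K : Subgroup G := H ⊓ φ.ker with hK
  set g₀ : G := q₀.out with hg₀
  set c : ZMod M := i₀ - toAdd (φ g₀) with hc
  set Fv : G → T.V := fun g => (Quotient.mk (rightRel H) g, c + toAdd (φ g)) with hFv
  have hFv₀ : Fv g₀ = (q₀, i₀) := by
    simp only [hFv, hg₀, hc]
    rw [sub_add_cancel]
    exact Prod.ext (Quotient.out_eq _) rfl
  have hιT : ∀ (q : Quotient (rightRel H)) (x : X) (i : ZMod M),
      T.toOGraph.ι ((q, x), i) = (q, i) := fun _ _ _ => rfl
  have hτT : ∀ (g : G) (x : X) (i : ZMod M),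
      T.toOGraph.τ ((Quotient.mk (rightRel H) g, x), i)
        = (Quotient.mk (rightRel H) (g * f x), i + 1) := by
    intro g x i
    rfl
  have hadj : ∀ (g : G) (x : X) (i : ZMod M),
      T.toOGraph.Adj (Quotient.mk (rightRel H) g, i)
        (Quotient.mk (rightRel H) (g * f x), i + 1) := by
    intro g x i
    exact Or.inl ⟨((Quotient.mk (rightRel H) g, x), i), rfl, hτT g x i⟩
  have hsymm : Symmetric T.toOGraph.Adj := fun _ _ h => h.symm
  have hFvstep : ∀ (g : G) (x : X),
      T.toOGraph.Adj (Fv g) (Fv (g * f x)) := by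
    intro g x
    have h1 : Fv (g * f x)
        = (Quotient.mk (rightRel H) (g * f x), (c + toAdd (φ g)) + 1) := by
      simp [hFv, map_mul, hφ, add_assoc]; rfl
    rw [h1]
    exact hadj g x (c + toAdd (φ g))
  let W : Subgroup G :=
    { carrier := {w | ∀ g : G, T.toOGraph.Reach (Fv g) (Fv (g * w))}
      one_mem' := by intro g; simp only [mul_one]; exact Relation.ReflTransGen.refl
      mul_mem' := by
        intro a b ha hb g
        have := Relation.ReflTransGen.trans (ha g) (hb (g * a))
        simpa [mul_assoc, OGraph.Reach] using this
      inv_mem' := by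
        intro a ha g
        have := (@Relation.ReflTransGen.stdSymm _ T.toOGraph.Adj ⟨hsymm⟩).symm _ _ (ha (g * a⁻¹))
        simpa [OGraph.Reach] using this }
  have hWtop : ∀ w g : G, T.toOGraph.Reach (Fv g) (Fv (g * w)) := by
    have hle : Subgroup.closure (Set.range f) ≤ W := by
      rw [Subgroup.closure_le]
      rintro _ ⟨x, rfl⟩ g
      exact Relation.ReflTransGen.single (hFvstep g x)
    intro w g
    exact (hgen ▸ hle) (Subgroup.mem_top w) g
  have hreach : ∀ g : G, T.toOGraph.Reach (q₀, i₀) (Fv g) := by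
    intro g
    have h2 := hWtop (g₀⁻¹ * g) g₀
    rw [hFv₀] at h2
    simpa using h2
  -- surjectivity of Fv onto the component
  have hsurj : ∀ v : T.V, T.toOGraph.Reach (q₀, i₀) v → ∃ g : G, Fv g = v := by
    intro v hv
    induction hv with
    | refl => exact ⟨g₀, hFv₀⟩
    | @tail b w hab hbw ih =>
      obtain ⟨g, hg⟩ := ih
      rcases hbw with ⟨e, he1, he2⟩ | ⟨e, he1, he2⟩
      · obtain ⟨⟨q, x⟩, j⟩ := e
        rw [hιT, ← hg] at he1
        have he1' : (q, j)
            = (Quotient.mk (rightRel H) g, c + toAdd (φ g)) := he1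
        rw [Prod.mk.injEq] at he1'
        obtain ⟨hq, hj⟩ := he1'
        subst hq; subst hj
        refine ⟨g * f x, ?_⟩
        rw [← he2, hτT g x]
        simp only [hFv]
        refine Prod.ext rfl ?_
        simp [map_mul, hφ, add_assoc]
      · obtain ⟨⟨q, x⟩, j⟩ := e
        obtain ⟨a, rfl⟩ := q.exists_rep
        rw [hτT a x j, ← hg] at he2
        have he2' : (Quotient.mk (rightRel H) (a * f x), j + 1)
            = (Quotient.mk (rightRel H) g, c + toAdd (φ g)) := he2
        rw [Prod.mk.injEq] at he2'
        obtain ⟨hq, hj⟩ := he2'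
        refine ⟨g * (f x)⁻¹, ?_⟩
        rw [← he1, hιT]
        simp only [hFv]
        refine Prod.ext ?_ ?_
        · refine Quotient.sound (rightRel_apply.mpr ?_)
          show a * (g * (f x)⁻¹)⁻¹ ∈ H
          have hmem : g * (a * f x)⁻¹ ∈ H := rightRel_apply.mp (Quotient.exact hq)
          have heq : a * (g * (f x)⁻¹)⁻¹ = (g * (a * f x)⁻¹)⁻¹ := by group
          rw [heq]
          exact H.inv_mem hmem
        · have hj' : j = c + toAdd (φ g) - 1 := eq_sub_of_add_eq hj
          rw [hj']
          simp [map_mul, map_inv, hφ, sub_eq_add_neg, add_assoc]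
  -- Fv respects the K-relation
  have hresp : ∀ a b : G, (rightRel K) a b → Fv a = Fv b := by
    intro a b hab
    have hab' : b * a⁻¹ ∈ K := rightRel_apply.mp hab
    obtain ⟨h1, h2⟩ := Subgroup.mem_inf.mp hab'
    have hker : φ (b * a⁻¹) = 1 := h2
    rw [map_mul, map_inv] at hker
    have hφab : φ a = φ b := (mul_inv_eq_one.mp hker).symm
    simp only [hFv]
    rw [hφab, Quotient.sound (rightRel_apply.mpr h1)]
  have hinj : ∀ a b : G, Fv a = Fv b →
      Quotient.mk (rightRel K) a = Quotient.mk (rightRel K) b := by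
    intro a b hab
    have hab' : (Quotient.mk (rightRel H) a, c + toAdd (φ a))
        = (Quotient.mk (rightRel H) b, c + toAdd (φ b)) := hab
    rw [Prod.mk.injEq] at hab'
    obtain ⟨h1, h2⟩ := hab'
    have hφab : φ a = φ b := toAdd.injective (add_left_cancel h2)
    refine Quotient.sound (rightRel_apply.mpr (Subgroup.mem_inf.mpr ⟨?_, ?_⟩))
    · exact rightRel_apply.mp (Quotient.exact h1)
    · show φ (b * a⁻¹) = 1
      rw [map_mul, map_inv, hφab, mul_inv_cancel]
  set C : LGraph X := T.component (q₀, i₀) with hC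
  set S : LGraph X := schreier G K f with hS
  let FV : S.V → C.V :=
    Quotient.lift (fun g => (⟨Fv g, hreach g⟩ : C.V))
      (fun a b hab => Subtype.ext (hresp a b hab))
  let FE : S.E → C.E := fun e =>
    Quotient.lift
      (fun g => (⟨((Quotient.mk (rightRel H) g, e.2), c + toAdd (φ g)), hreach g⟩ : C.E))
      (fun a b hab => Subtype.ext (by
        have h := hresp a b hab
        have h' : (Quotient.mk (rightRel H) a, c + toAdd (φ a))
            = (Quotient.mk (rightRel H) b, c + toAdd (φ b)) := h
        rw [Prod.mk.injEq] at h'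
        show ((Quotient.mk (rightRel H) a, e.2), c + toAdd (φ a))
          = ((Quotient.mk (rightRel H) b, e.2), c + toAdd (φ b))
        rw [h'.1, h'.2])) e.1
  have hFVbij : Function.Bijective FV := by
    constructor
    · intro a b hab
      induction a using Quotient.ind with | _ a =>
      induction b using Quotient.ind with | _ b =>
      exact hinj a b (congrArg Subtype.val hab)
    · rintro ⟨v, hv⟩
      obtain ⟨g, hg⟩ := hsurj v hv
      exact ⟨Quotient.mk (rightRel K) g, Subtype.ext hg⟩
  have hFEbij : Function.Bijective FE := by
    constructor
    · rintro ⟨qa, x⟩ ⟨qb, y⟩ hab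
      induction qa using Quotient.ind with | _ a =>
      induction qb using Quotient.ind with | _ b =>
      have h : ((Quotient.mk (rightRel H) a, x), c + toAdd (φ a))
          = ((Quotient.mk (rightRel H) b, y), c + toAdd (φ b)) :=
        congrArg Subtype.val hab
      rw [Prod.mk.injEq, Prod.mk.injEq] at h
      obtain ⟨⟨h1, hx⟩, h2⟩ := h
      exact Prod.ext (hinj a b (Prod.ext h1 h2)) hx
    · rintro ⟨⟨⟨q, x⟩, j⟩, hr⟩
      have hr' : T.toOGraph.Reach (q₀, i₀) (q, j) := hr
      obtain ⟨g, hg⟩ := hsurj (q, j) hr'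
      refine ⟨(Quotient.mk (rightRel K) g, x), Subtype.ext ?_⟩
      have hg' : (Quotient.mk (rightRel H) g, c + toAdd (φ g)) = (q, j) := hg
      rw [Prod.mk.injEq] at hg'
      show ((Quotient.mk (rightRel H) g, x), c + toAdd (φ g)) = ((q, x), j)
      rw [hg'.1, hg'.2]
  refine ⟨LIso.symm' ⟨⟨Equiv.ofBijective FV hFVbij, Equiv.ofBijective FE hFEbij, ?_, ?_⟩, ?_⟩⟩
  · rintro ⟨q, x⟩
    induction q using Quotient.ind with | _ g =>
    rfl
  · rintro ⟨q, x⟩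
    induction q using Quotient.ind with | _ g =>
    show C.toOGraph.τ (FE (Quotient.mk (rightRel K) g, x))
      = FV (S.toOGraph.τ (Quotient.mk (rightRel K) g, x))
    have hSτ : S.toOGraph.τ (Quotient.mk (rightRel K) g, x)
        = Quotient.mk (rightRel K) (g * f x) := rfl
    rw [hSτ]
    refine Subtype.ext ?_
    show T.toOGraph.τ ((Quotient.mk (rightRel H) g, x), c + toAdd (φ g)) = Fv (g * f x)
    rw [hτT g x]
    simp only [hFv]
    refine Prod.ext rfl ?_
    simp [map_mul, hφ, add_assoc]
  · rintro ⟨q, x⟩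
    induction q using Quotient.ind with | _ g =>
    rfl

/-- Let `G = ⟨X | R⟩` with every relator of total exponent ≡ 0 (mod M)
(so the total exponent mod `M` is a well-defined homomorphism `G →* ℤ/Mℤ`, namely
`PresentedGroup.toGroup h`), and let `H ≤ G`. Then every connected component of the
tensor product of the Schreier graph of `H` with `C_M` is isomorphic, as a labeled
graph, to the Schreier graph of `H_M = {h ∈ H : exp_X(h) ≡ 0 (mod M)}`. -/
theorem schreier_tensor_cycle_components {X : Type} (R : Set (FreeGroup X)) (M : ℕ)
    (h : ∀ r ∈ R, FreeGroup.lift (fun _ : X => Multiplicative.ofAdd (1 : ZMod M)) r = 1)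
    (H : Subgroup (PresentedGroup R))
    (p : ((schreier (PresentedGroup R) H (PresentedGroup.of (rels := R))).tensorC M).V) :
    Nonempty (LIso
      (((schreier (PresentedGroup R) H (PresentedGroup.of (rels := R))).tensorC M).component p)
      (schreier (PresentedGroup R) (H ⊓ (PresentedGroup.toGroup h).ker)
        (PresentedGroup.of (rels := R)))) :=
  schreier_aux PresentedGroup.of (PresentedGroup.closure_range_of R)
    (PresentedGroup.toGroup h) (fun x => PresentedGroup.toGroup.of h (x := x)) H p
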